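/- 16/(9π) = ∑_{n=0}^∞ ((1/2)_n)^2/((n+1)(n+2)(n!)^2). -/

import Mathlib

open Real

noncomputable def rising (x : ℝ) (n : ℕ) : ℝ := ∏ i ∈ Finset.range n, (x + i)

namespace Stmt4Aux

open Filter Finset Topology

noncomputable def c (n : ℕ) : ℝ := ∏ i ∈ range n, ((2 * i + 1 : ℝ) / (2 * i + 2))

lemma c_pos (n : ℕ) : 0 < c n := Finset.prod_pos (fun i _ => by positivity)

lemma c_succ (n : ℕ) : c (n + 1) = c n * ((2 * n + 1) / (2 * n + 2)) :=
  Finset.prod_range_succ _ _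

lemma rising_eq (n : ℕ) : rising (1/2) n = c n * n.factorial := by
  induction n with
  | zero => simp [rising, c]
  | succ n ih =>
    rw [rising, Finset.prod_range_succ, ← rising, ih, c_succ]
    have h : (2 * (n : ℝ) + 2) ≠ 0 := by positivity
    push_cast [Nat.factorial_succ]
    field_simp
    ring

lemma W_c (n : ℕ) : Real.Wallis.W n * (c n ^ 2 * (2 * n + 1)) = 1 := by
  induction n with
  | zero => simp [Real.Wallis.W, c]
  | succ n ih =>
    rw [Real.Wallis.W_succ, c_succ]
    have h1 : (2 * (n : ℝ) + 1) ≠ 0 := by positivity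
    have h2 : (2 * (n : ℝ) + 2) ≠ 0 := by positivity
    have h3 : (2 * (n : ℝ) + 3) ≠ 0 := by positivity
    push_cast
    field_simp
    linear_combination (2 * (n : ℝ) + 3) * ih

lemma c_sq_tendsto :
    Tendsto (fun n : ℕ => c n ^ 2 * (2 * n + 1)) atTop (𝓝 (2 / π)) := by
  have hW : ∀ n : ℕ, c n ^ 2 * (2 * n + 1) = (Real.Wallis.W n)⁻¹ := by
    intro n
    have h := W_c n
    have hWpos := Real.Wallis.W_pos n
    field_simp
    linarith [h]
  have : Tendsto (fun n : ℕ => (Real.Wallis.W n)⁻¹) atTop (𝓝 ((π / 2)⁻¹)) :=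
    Real.Wallis.tendsto_W_nhds_pi_div_two.inv₀ (by positivity)
  have h2 : ((π : ℝ) / 2)⁻¹ = 2 / π := by
    rw [inv_div]
  rw [← h2]
  exact this.congr (fun n => (hW n).symm)

noncomputable def b (n : ℕ) : ℝ := 4 * n * (4 * n + 5) / (9 * (n + 1)) * c n ^ 2

lemma sum_eq (N : ℕ) :
    ∑ n ∈ range N, c n ^ 2 / ((n + 1) * (n + 2)) = b N := by
  induction N with
  | zero => simp [b]
  | succ N ih =>
    rw [Finset.sum_range_succ, ih, b, b, c_succ]
    have h1 : ((N : ℝ) + 1) ≠ 0 := by positivity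
    have h2 : ((N : ℝ) + 2) ≠ 0 := by positivity
    have h3 : (2 * (N : ℝ) + 2) ≠ 0 := by positivity
    push_cast
    field_simp
    ring

lemma q_tendsto :
    Tendsto (fun n : ℕ => 4 * (n : ℝ) * (4 * n + 5) / (9 * (n + 1) * (2 * n + 1)))
      atTop (𝓝 (8 / 9)) := by
  have hc : ContinuousAt (fun x : ℝ => 4 * (4 + 5 * x) / (9 * (1 + x) * (2 + x))) 0 := by
    apply ContinuousAt.div
    · fun_prop
    · fun_prop
    · norm_num
  have h0 : Tendsto (fun n : ℕ => 1 / (n : ℝ)) atTop (𝓝 0) :=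
    tendsto_one_div_atTop_nhds_zero_nat
  have h1 : Tendsto (fun n : ℕ => 4 * (4 + 5 * (1 / (n : ℝ))) /
      (9 * (1 + 1 / (n : ℝ)) * (2 + 1 / (n : ℝ)))) atTop (𝓝 (8 / 9)) := by
    have := hc.tendsto.comp h0
    norm_num at this
    convert this using 2
    norm_num
  apply h1.congr'
  filter_upwards [eventually_ge_atTop 1] with n hn
  have hn' : (n : ℝ) ≠ 0 := by positivity
  field_simp

lemma b_tendsto : Tendsto b atTop (𝓝 (16 / (9 * π))) := by
  have h := q_tendsto.mul c_sq_tendsto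
  have hval : (8 : ℝ) / 9 * (2 / π) = 16 / (9 * π) := by
    rw [div_mul_div_comm]
    norm_num
  rw [hval] at h
  apply h.congr
  intro n
  have h1 : ((n : ℝ) + 1) ≠ 0 := by positivity
  have h2 : (2 * (n : ℝ) + 1) ≠ 0 := by positivity
  simp only [b]
  field_simp

lemma term_eq (n : ℕ) :
    (rising (1/2) n) ^ 2 / ((n + 1) * (n + 2) * (n.factorial : ℝ) ^ 2) =
      c n ^ 2 / ((n + 1) * (n + 2)) := by
  rw [rising_eq]
  have h1 : ((n : ℝ) + 1) ≠ 0 := by positivity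
  have h2 : ((n : ℝ) + 2) ≠ 0 := by positivity
  have h3 : (n.factorial : ℝ) ≠ 0 := Nat.cast_ne_zero.mpr n.factorial_ne_zero
  field_simp

lemma sum_eq' (N : ℕ) :
    ∑ n ∈ range N, (rising (1/2) n) ^ 2 / ((n + 1) * (n + 2) * (n.factorial : ℝ) ^ 2) = b N := by
  rw [← sum_eq]
  exact Finset.sum_congr rfl (fun n _ => term_eq n)

lemma hasSum_main :
    HasSum (fun n : ℕ => (rising (1/2) n) ^ 2 / ((n + 1) * (n + 2) * (n.factorial : ℝ) ^ 2))
      (16 / (9 * π)) := by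
  set T := fun n : ℕ => (rising (1/2) n) ^ 2 / ((n + 1) * (n + 2) * (n.factorial : ℝ) ^ 2) with hT
  have hTnonneg : ∀ n, 0 ≤ T n := by
    intro n
    apply div_nonneg (by positivity)
    positivity
  have htendsto : Tendsto (fun N => ∑ n ∈ range N, T n) atTop (𝓝 (16 / (9 * π))) := by
    apply b_tendsto.congr
    intro N
    exact (sum_eq' N).symm
  have hmono : Monotone (fun N => ∑ n ∈ range N, T n) := by
    apply monotone_nat_of_le_succ
    intro n
    rw [Finset.sum_range_succ]
    exact le_add_of_nonneg_right (hTnonneg n)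
  have hbound : ∀ N, ∑ n ∈ range N, T n ≤ 16 / (9 * π) :=
    fun N => hmono.ge_of_tendsto htendsto N
  have hsummable : Summable T := summable_of_sum_range_le hTnonneg hbound
  exact (hsummable.hasSum_iff_tendsto_nat).mpr htendsto

end Stmt4Aux

theorem stmt4 :
    16 / (9 * π) =
    ∑' n : ℕ, (rising (1/2) n) ^ 2 / ((n + 1) * (n + 2) * (n.factorial : ℝ) ^ 2) := by
  exact Stmt4Aux.hasSum_main.tsum_eq.symm
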